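/- arXiv:2403.05120 — 2 statements merged into one kernel-verified Lean document; each statement's English description precedes it below -/
import Mathlib

section
/- If u and v are false twins in a graph G and S is a mutual-visibility set of G with S ∩ {u,v} = {u}, then (S \ {u}) ∪ {v} is also a mutual-visibility set of G. -/
open SimpleGraph

variable {V : Type*}

/-- A walk is a shortest path if it is a path and its length equals the distance
between its endpoints. -/
def SimpleGraph.IsShortestPath (G : SimpleGraph V) {u v : V} (p : G.Walk u v) : Prop :=
  p.IsPath ∧ p.length = G.dist u v

/-- `S` is a general position set: no three vertices of `S` lie on a common shortest path. -/
def SimpleGraph.IsGPSet (G : SimpleGraph V) (S : Set V) : Prop :=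
  ∀ ⦃u v : V⦄ (p : G.Walk u v), G.IsShortestPath p →
    ∀ x ∈ S, ∀ y ∈ S, ∀ z ∈ S, x ≠ y → x ≠ z → y ≠ z →
      ¬ (x ∈ p.support ∧ y ∈ p.support ∧ z ∈ p.support)

/-- `u` and `v` are `S`-visible: some shortest `u,v`-path has no internal vertex in `S`. -/
def SimpleGraph.SVisible (G : SimpleGraph V) (S : Set V) (u v : V) : Prop :=
  ∃ p : G.Walk u v, G.IsShortestPath p ∧ ∀ w ∈ p.support, w ≠ u → w ≠ v → w ∉ S

/-- `S` is a mutual-visibility set. -/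
def SimpleGraph.IsMVSet (G : SimpleGraph V) (S : Set V) : Prop :=
  ∀ u ∈ S, ∀ v ∈ S, u ≠ v → G.SVisible S u v

/-- `S` is a total mutual-visibility set. -/
def SimpleGraph.IsTotalMVSet (G : SimpleGraph V) (S : Set V) : Prop :=
  ∀ u v : V, u ≠ v → G.SVisible S u v

/-- `S` is an outer mutual-visibility set. -/
def SimpleGraph.IsOuterMVSet (G : SimpleGraph V) (S : Set V) : Prop :=
  G.IsMVSet S ∧ ∀ u ∈ S, ∀ v ∉ S, u ≠ v → G.SVisible S u v

/-- The mutual-visibility number `μ(G)`. -/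
noncomputable def SimpleGraph.mutualVisibilityNumber (G : SimpleGraph V) [Fintype V] : ℕ :=
  sSup {k | ∃ S : Finset V, G.IsMVSet ↑S ∧ S.card = k}

/-- The total mutual-visibility number `μ_t(G)`. -/
noncomputable def SimpleGraph.totalMutualVisibilityNumber (G : SimpleGraph V) [Fintype V] : ℕ :=
  sSup {k | ∃ S : Finset V, G.IsTotalMVSet ↑S ∧ S.card = k}

/-- The outer mutual-visibility number `μ_o(G)`. -/
noncomputable def SimpleGraph.outerMutualVisibilityNumber (G : SimpleGraph V) [Fintype V] : ℕ :=
  sSup {k | ∃ S : Finset V, G.IsOuterMVSet ↑S ∧ S.card = k}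

/-- The general position number `gp(G)`. -/
noncomputable def SimpleGraph.gpNumber (G : SimpleGraph V) [Fintype V] : ℕ :=
  sSup {k | ∃ S : Finset V, G.IsGPSet ↑S ∧ S.card = k}

/-- The double graph `D(G)`: two copies of each vertex, `(u, b)` adjacent to `(v, c)`
iff `u` adjacent to `v` in `G`. -/
def SimpleGraph.doubleGraph (G : SimpleGraph V) : SimpleGraph (V × Bool) where
  Adj x y := G.Adj x.1 y.1
  symm := ⟨by intro _ _ h; exact G.adj_symm h⟩
  loopless := ⟨by intro x h; exact G.irrefl h⟩

/-- The Mycielskian `M(G)`: `some (u, false)` are the original vertices, `some (u, true)`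
their copies, and `none` is the apex vertex `v*`. -/
def SimpleGraph.mycielskian (G : SimpleGraph V) : SimpleGraph (Option (V × Bool)) where
  Adj x y := match x, y with
    | some (u, false), some (v, false) => G.Adj u v
    | some (u, false), some (v, true) => G.Adj u v
    | some (u, true), some (v, false) => G.Adj u v
    | some (_, true), none => True
    | none, some (_, true) => True
    | _, _ => False
  symm := by
    constructor
    rintro (_ | ⟨u, (_|_)⟩) (_ | ⟨v, (_|_)⟩) h <;>
      first
        | exact h
        | exact G.adj_symm h
  loopless := by
    constructor
    rintro (_ | ⟨u, (_|_)⟩) h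
    · exact h
    · exact G.irrefl h
    · exact h


private lemma iso_dist_le_aux (G : SimpleGraph V) (hconn : G.Connected) (e : G ≃g G) (a b : V) :
    G.dist (e a) (e b) ≤ G.dist a b := by
  obtain ⟨p, hp⟩ := (hconn a b).exists_walk_length_eq_dist
  calc G.dist (e a) (e b) ≤ (p.map e.toHom).length := SimpleGraph.dist_le _
    _ = p.length := p.length_map _
    _ = G.dist a b := hp

private lemma iso_dist_aux (G : SimpleGraph V) (hconn : G.Connected) (e : G ≃g G) (a b : V) :
    G.dist (e a) (e b) = G.dist a b := by
  refine le_antisymm (iso_dist_le_aux G hconn e a b) ?_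
  have := iso_dist_le_aux G hconn e.symm (e a) (e b)
  simpa using this

private lemma mv_image_aux (G : SimpleGraph V) (hconn : G.Connected) (e : G ≃g G)
    (S : Set V) (hS : G.IsMVSet S) : G.IsMVSet (⇑e '' S) := by
  rintro a ⟨x, hx, rfl⟩ b ⟨y, hy, rfl⟩ hab
  have hxy : x ≠ y := fun h => hab (by rw [h])
  obtain ⟨p, ⟨hpath, hlen⟩, hint⟩ := hS x hx y hy hxy
  refine ⟨p.map e.toHom, ⟨p.map_isPath_of_injective e.injective hpath, ?_⟩, ?_⟩
  · rw [p.length_map, hlen, iso_dist_aux G hconn e]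
  · intro w hw hwx hwy hwS
    rw [SimpleGraph.Walk.support_map, List.mem_map] at hw
    obtain ⟨w', hw', rfl⟩ := hw
    obtain ⟨s, hs, hse⟩ := hwS
    have : w' = s := e.injective hse.symm
    subst this
    exact hint w' hw' (fun h => hwx (by subst h; rfl)) (fun h => hwy (by subst h; rfl)) hs

theorem false_twins_mv (G : SimpleGraph V) (hconn : G.Connected) (u v : V)
    (htwin : G.neighborSet u = G.neighborSet v) (S : Set V)
    (hS : G.IsMVSet S) (hSuv : S ∩ {u, v} = {u}) :
    G.IsMVSet ((S \ {u}) ∪ {v}) := by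
  classical
  by_cases huv : u = v
  · subst huv
    have hu : u ∈ S := by
      have : u ∈ S ∩ {u, u} := by rw [hSuv]; rfl
      exact this.1
    have : (S \ {u}) ∪ {u} = S := by
      rw [Set.diff_union_self]
      exact Set.union_eq_self_of_subset_right (Set.singleton_subset_iff.mpr hu)
    rwa [this]
  · have hu : u ∈ S := by
      have : u ∈ S ∩ {u, v} := by rw [hSuv]; rfl
      exact this.1
    have hv : v ∉ S := by
      intro hvS
      have : v ∈ S ∩ {u, v} := ⟨hvS, Or.inr rfl⟩
      rw [hSuv] at this
      exact huv this.symm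
    have htwin' : ∀ w, G.Adj u w ↔ G.Adj v w := by
      intro w
      have := Set.ext_iff.mp htwin w
      simpa [SimpleGraph.mem_neighborSet] using this
    have hadj : ¬ G.Adj u v := by
      intro h
      have := (htwin' v).mp h
      exact G.irrefl this
    have key : ∀ x y : V, G.Adj x y → G.Adj (Equiv.swap u v x) (Equiv.swap u v y) := by
      intro x y hxy
      by_cases hx1 : x = u
      · rw [hx1] at hxy ⊢
        by_cases hy1 : y = u
        · rw [hy1] at hxy; exact absurd hxy G.irrefl
        by_cases hy2 : y = v
        · rw [hy2] at hxy; exact absurd hxy hadj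
        · rw [Equiv.swap_apply_left, Equiv.swap_apply_of_ne_of_ne hy1 hy2]
          exact (htwin' y).mp hxy
      by_cases hx2 : x = v
      · rw [hx2] at hxy ⊢
        by_cases hy1 : y = u
        · rw [hy1] at hxy; exact absurd hxy.symm hadj
        by_cases hy2 : y = v
        · rw [hy2] at hxy; exact absurd hxy G.irrefl
        · rw [Equiv.swap_apply_right, Equiv.swap_apply_of_ne_of_ne hy1 hy2]
          exact (htwin' y).mpr hxy
      · rw [Equiv.swap_apply_of_ne_of_ne hx1 hx2]
        by_cases hy1 : y = u
        · rw [hy1] at hxy ⊢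
          rw [Equiv.swap_apply_left]
          exact ((htwin' x).mp hxy.symm).symm
        by_cases hy2 : y = v
        · rw [hy2] at hxy ⊢
          rw [Equiv.swap_apply_right]
          exact ((htwin' x).mpr hxy.symm).symm
        · rw [Equiv.swap_apply_of_ne_of_ne hy1 hy2]
          exact hxy
    let e : G ≃g G := ⟨Equiv.swap u v, by
      intro x y
      constructor
      · intro h
        have := key _ _ h
        simpa using this
      · exact key x y⟩
    have himg : (S \ {u}) ∪ {v} = ⇑e '' S := by
      have h1 : ⇑e '' S = ⇑(Equiv.swap u v) ⁻¹' S := by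
        rw [show ⇑e = ⇑(Equiv.swap u v) from rfl, Equiv.image_eq_preimage_symm, Equiv.symm_swap]
      rw [h1]
      ext w
      simp only [Set.mem_preimage, Set.mem_union, Set.mem_diff, Set.mem_singleton_iff]
      by_cases hw1 : w = u
      · subst hw1
        simp [Equiv.swap_apply_left, hv, huv]
      by_cases hw2 : w = v
      · subst hw2
        simp [Equiv.swap_apply_right, hu]
      · rw [Equiv.swap_apply_of_ne_of_ne hw1 hw2]
        simp [hw1, hw2]
    rw [himg]
    exact mv_image_aux G hconn e S hS
end

section
/- For every n ≥ 7, the mutual-visibility number of the double graph of the cycle C_n equals n. -/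
open SimpleGraph

variable {V : Type*}

open scoped Fin.NatCast Fin.CommRing
variable {V : Type*} {G : SimpleGraph V}

@[simp] lemma doubleGraph_adj {x y : V × Bool} : G.doubleGraph.Adj x y ↔ G.Adj x.1 y.1 := Iff.rfl

def fstHom (G : SimpleGraph V) : G.doubleGraph →g G := ⟨Prod.fst, fun h => h⟩

lemma lift_walk : ∀ {i j : V} (w : G.Walk i j), 1 ≤ w.length → ∀ b c : Bool,
    ∃ p : G.doubleGraph.Walk (i, b) (j, c), p.length = w.length ∧
      ∀ x ∈ p.support, x = (i, b) ∨ x = (j, c) ∨ x.2 = true := by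
  intro i j w
  induction w with
  | nil => simp
  | @cons u u' v h w' ih =>
    intro _ b c
    cases w' with
    | nil =>
      have hadj : G.doubleGraph.Adj (u, b) (u', c) := by simpa using h
      refine ⟨Walk.cons hadj Walk.nil, by simp, ?_⟩
      intro x hx
      simp only [Walk.support_cons, Walk.support_nil, List.mem_cons,
        List.not_mem_nil, or_false] at hx
      rcases hx with rfl | rfl
      · left; rfl
      · right; left; rfl
    | @cons a a' b' h2 w3 =>
      obtain ⟨p', hlen, hsupp⟩ := ih (by simp) true c
      have hadj : G.doubleGraph.Adj (u, b) (u', true) := by simpa using h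
      refine ⟨Walk.cons hadj p', by simpa using hlen, ?_⟩
      intro x hx
      simp only [Walk.support_cons, List.mem_cons] at hx
      rcases hx with rfl | hx
      · left; rfl
      · rcases hsupp x hx with rfl | rfl | hh
        · right; right; rfl
        · right; left; rfl
        · right; right; exact hh

lemma cycle_reachable {m : ℕ} (i j : Fin (m + 2)) : (cycleGraph (m + 2)).Reachable i j := by
  have key : ∀ (d : ℕ), (cycleGraph (m + 2)).Reachable i (i + (d : Fin (m + 2))) := by
    intro d
    induction d with
    | zero => simpa using (Reachable.refl i)
    | succ d ih =>
      refine ih.trans (Adj.reachable ?_)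
      rw [cycleGraph_adj]
      right
      push_cast
      ring
  have h2 : i + ((j - i).val : Fin (m + 2)) = j := by
    rw [Fin.cast_val_eq_self]; ring
  have := key (j - i).val
  rwa [h2] at this

lemma fin_cast_ne_zero {m : ℕ} (c : ℕ) (h0 : 0 < c) (hc : c < m + 2) :
    (c : Fin (m + 2)) ≠ 0 := by
  intro h
  have h2 := congrArg Fin.val h
  rw [Fin.val_natCast] at h2
  rw [Nat.mod_eq_of_lt hc] at h2
  simp at h2
  omega

lemma mv_lower {m : ℕ} : ((cycleGraph (m + 2)).doubleGraph).IsMVSet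
    ↑((Finset.univ : Finset (Fin (m + 2))).image (fun i => (i, false))) := by
  classical
  intro u hu v hv huv
  simp only [Finset.coe_image, Finset.coe_univ, Set.image_univ, Set.mem_range] at hu hv
  obtain ⟨i, rfl⟩ := hu
  obtain ⟨j, rfl⟩ := hv
  have hij : i ≠ j := fun h => huv (by rw [h])
  obtain ⟨w0⟩ := cycle_reachable i j
  have hw0len : 1 ≤ w0.length := by
    rcases Nat.eq_zero_or_pos w0.length with h | h
    · exact absurd (SimpleGraph.Walk.eq_of_length_eq_zero h) hij
    · omega
  obtain ⟨p0, -, -⟩ := lift_walk w0 hw0len false false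
  have hreach : ((cycleGraph (m + 2)).doubleGraph).Reachable (i, false) (j, false) := ⟨p0⟩
  obtain ⟨r, hrlen⟩ := hreach.exists_walk_length_eq_dist
  set wC := r.map (fstHom (cycleGraph (m + 2))) with hwC
  have hwClen : 1 ≤ wC.length := by
    rcases Nat.eq_zero_or_pos wC.length with h | h
    · exact absurd (SimpleGraph.Walk.eq_of_length_eq_zero h) hij
    · omega
  obtain ⟨p, hplen, hpsupp⟩ := lift_walk wC hwClen false false
  refine ⟨p.bypass, ⟨p.bypass_isPath, ?_⟩, ?_⟩
  · have h1 : p.bypass.length ≤ ((cycleGraph (m + 2)).doubleGraph).dist (i, false) (j, false) := by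
      calc p.bypass.length ≤ p.length := p.length_bypass_le
        _ = wC.length := hplen
        _ = r.length := by rw [hwC]; exact SimpleGraph.Walk.length_map _ r
        _ = _ := hrlen
    have h2 : ((cycleGraph (m + 2)).doubleGraph).dist (i, false) (j, false) ≤ p.bypass.length :=
      SimpleGraph.dist_le p.bypass
    convert le_antisymm h1 h2 using 1
    rfl
  · intro w hw hwu hwv
    have hmem := hpsupp w (p.support_bypass_subset hw)
    rcases hmem with rfl | rfl | hh
    · exact absurd rfl hwu
    · exact absurd rfl hwv
    · intro hcon
      simp only [Finset.coe_image, Finset.coe_univ, Set.image_univ, Set.mem_range] at hcon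
      obtain ⟨a, ha⟩ := hcon
      rw [← ha] at hh
      simp at hh
section UpperAux
variable {m : ℕ}

def IsFullCol {N : ℕ} (S : Finset (Fin N × Bool)) (i : Fin N) : Prop :=
  (i, false) ∈ S ∧ (i, true) ∈ S

def IsOccCol {N : ℕ} (S : Finset (Fin N × Bool)) (i : Fin N) : Prop :=
  (i, false) ∈ S ∨ (i, true) ∈ S

instance {N : ℕ} (S : Finset (Fin N × Bool)) (i : Fin N) : Decidable (IsFullCol S i) :=
  inferInstanceAs (Decidable (_ ∧ _))

instance {N : ℕ} (S : Finset (Fin N × Bool)) (i : Fin N) : Decidable (IsOccCol S i) :=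
  inferInstanceAs (Decidable (_ ∨ _))

lemma blocked2 (hn : 7 ≤ m + 2) (S : Finset (Fin (m + 2) × Bool))
    (hS : ((cycleGraph (m + 2)).doubleGraph).IsMVSet ↑S)
    (k : Fin (m + 2)) (hk : IsFullCol S k) (h1 : IsOccCol S (k - 1)) (h2 : IsOccCol S (k + 1)) :
    False := by
  have c2 : (2 : Fin (m + 2)) ≠ 0 := by
    have := fin_cast_ne_zero (m := m) 2 (by omega) (by omega); rwa [Nat.cast_ofNat] at this
  have c4 : (4 : Fin (m + 2)) ≠ 0 := by
    have := fin_cast_ne_zero (m := m) 4 (by omega) (by omega); rwa [Nat.cast_ofNat] at this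
  obtain ⟨b1, hx⟩ : ∃ b, ((k - 1 : Fin (m + 2)), b) ∈ S := h1.elim (⟨false, ·⟩) (⟨true, ·⟩)
  obtain ⟨b2, hy⟩ : ∃ b, ((k + 1 : Fin (m + 2)), b) ∈ S := h2.elim (⟨false, ·⟩) (⟨true, ·⟩)
  have hne : ((k - 1 : Fin (m + 2)), b1) ≠ ((k + 1 : Fin (m + 2)), b2) := by
    intro h
    have h' := congrArg Prod.fst h
    simp only at h'
    exact c2 (by linear_combination -h')
  obtain ⟨p, ⟨hpath, hplen⟩, havoid⟩ :=
    hS _ (Finset.mem_coe.mpr hx) _ (Finset.mem_coe.mpr hy) hne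
  have hadj1 : ((cycleGraph (m + 2)).doubleGraph).Adj (k - 1, b1) (k, true) := by
    rw [doubleGraph_adj]; rw [cycleGraph_adj]; right; ring
  have hadj2 : ((cycleGraph (m + 2)).doubleGraph).Adj (k, true) (k + 1, b2) := by
    rw [doubleGraph_adj]; rw [cycleGraph_adj]; right; ring
  have hd : ((cycleGraph (m + 2)).doubleGraph).dist (k - 1, b1) (k + 1, b2) ≤ 2 := by
    simpa using SimpleGraph.dist_le (SimpleGraph.Walk.cons hadj1
      (SimpleGraph.Walk.cons hadj2 SimpleGraph.Walk.nil))
  have hlen2 : p.length ≤ 2 := by omega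
  obtain h0 | h1' | h2' : p.length = 0 ∨ p.length = 1 ∨ p.length = 2 := by omega
  · exact hne (SimpleGraph.Walk.eq_of_length_eq_zero h0)
  · have ha := p.adj_getVert_succ (i := 0) (by omega)
    rw [SimpleGraph.Walk.getVert_zero] at ha
    rw [show (0 + 1 : ℕ) = p.length by omega, SimpleGraph.Walk.getVert_length] at ha
    rw [doubleGraph_adj] at ha
    simp only at ha
    rw [cycleGraph_adj] at ha
    rcases ha with h | h
    · exact (fin_cast_ne_zero (m := m) 3 (by omega) (by omega))
        (by rw [Nat.cast_ofNat]; linear_combination -h)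
    · exact one_ne_zero (by linear_combination h)
  · have ha1 := p.adj_getVert_succ (i := 0) (by omega)
    have ha2 := p.adj_getVert_succ (i := 1) (by omega)
    rw [SimpleGraph.Walk.getVert_zero] at ha1
    rw [show (1 + 1 : ℕ) = p.length by omega, SimpleGraph.Walk.getVert_length] at ha2
    set w := p.getVert 1 with hwdef
    rw [doubleGraph_adj] at ha1 ha2
    simp only at ha1 ha2
    rw [cycleGraph_adj] at ha1 ha2
    have hw1 : w.1 = k := by
      rcases ha1 with h | h <;> rcases ha2 with h' | h'
      · exact absurd (by linear_combination -h - h' : (4 : Fin (m + 2)) = 0) c4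
      · exact absurd (by linear_combination -h + h' : (2 : Fin (m + 2)) = 0) c2
      · exact absurd (by linear_combination h - h' : (2 : Fin (m + 2)) = 0) c2
      · linear_combination h
    have hwS : w ∈ S := by
      rcases hk with ⟨hkf, hkt⟩
      cases hb : w.2
      · rw [show w = (k, false) from Prod.ext hw1 hb]; exact hkf
      · rw [show w = (k, true) from Prod.ext hw1 hb]; exact hkt
    have hwsup : w ∈ p.support :=
      SimpleGraph.Walk.mem_support_iff_exists_getVert.mpr ⟨1, rfl, by omega⟩
    have hwne1 : w ≠ (k - 1, b1) := by
      intro h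
      have h' := congrArg Prod.fst h
      simp only at h'
      rw [hw1] at h'
      exact one_ne_zero (α := Fin (m + 2)) (by linear_combination h')
    have hwne2 : w ≠ (k + 1, b2) := by
      intro h
      have h' := congrArg Prod.fst h
      simp only at h'
      rw [hw1] at h'
      exact one_ne_zero (α := Fin (m + 2)) (by linear_combination -h')
    exact havoid w hwsup hwne1 hwne2 (Finset.mem_coe.mpr hwS)

end UpperAux
section UpperAux2
variable {m : ℕ}

lemma blocked3 (hn : 7 ≤ m + 2) (S : Finset (Fin (m + 2) × Bool))
    (hS : ((cycleGraph (m + 2)).doubleGraph).IsMVSet ↑S)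
    (i : Fin (m + 2)) (h1 : IsOccCol S i) (h2 : IsOccCol S (i + 3))
    (hf : IsFullCol S (i + 1) ∨ IsFullCol S (i + 2)) :
    False := by
  have cast_ne : ∀ c : ℕ, 0 < c → c < m + 2 → ((c : ℕ) : Fin (m + 2)) ≠ 0 :=
    fun c h0 hc => fin_cast_ne_zero c h0 hc
  have c2 : (2 : Fin (m + 2)) ≠ 0 := by
    have := cast_ne 2 (by omega) (by omega); rwa [Nat.cast_ofNat] at this
  have c3 : (3 : Fin (m + 2)) ≠ 0 := by
    have := cast_ne 3 (by omega) (by omega); rwa [Nat.cast_ofNat] at this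
  have c4 : (4 : Fin (m + 2)) ≠ 0 := by
    have := cast_ne 4 (by omega) (by omega); rwa [Nat.cast_ofNat] at this
  have c5 : (5 : Fin (m + 2)) ≠ 0 := by
    have := cast_ne 5 (by omega) (by omega); rwa [Nat.cast_ofNat] at this
  have c6 : (6 : Fin (m + 2)) ≠ 0 := by
    have := cast_ne 6 (by omega) (by omega); rwa [Nat.cast_ofNat] at this
  obtain ⟨b1, hx⟩ : ∃ b, (i, b) ∈ S := h1.elim (⟨false, ·⟩) (⟨true, ·⟩)
  obtain ⟨b2, hy⟩ : ∃ b, ((i + 3 : Fin (m + 2)), b) ∈ S := h2.elim (⟨false, ·⟩) (⟨true, ·⟩)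
  have hne : ((i : Fin (m + 2)), b1) ≠ ((i + 3 : Fin (m + 2)), b2) := by
    intro h
    have h' := congrArg Prod.fst h
    simp only at h'
    exact c3 (by linear_combination -h')
  obtain ⟨p, ⟨hpath, hplen⟩, havoid⟩ :=
    hS _ (Finset.mem_coe.mpr hx) _ (Finset.mem_coe.mpr hy) hne
  have hadj1 : ((cycleGraph (m + 2)).doubleGraph).Adj (i, b1) (i + 1, true) := by
    rw [doubleGraph_adj]; rw [cycleGraph_adj]; right; ring
  have hadj2 : ((cycleGraph (m + 2)).doubleGraph).Adj (i + 1, true) (i + 2, true) := by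
    rw [doubleGraph_adj]; rw [cycleGraph_adj]; right; ring
  have hadj3 : ((cycleGraph (m + 2)).doubleGraph).Adj (i + 2, true) (i + 3, b2) := by
    rw [doubleGraph_adj]; rw [cycleGraph_adj]; right; ring
  have hd : ((cycleGraph (m + 2)).doubleGraph).dist (i, b1) (i + 3, b2) ≤ 3 := by
    simpa using SimpleGraph.dist_le (SimpleGraph.Walk.cons hadj1 (SimpleGraph.Walk.cons hadj2
      (SimpleGraph.Walk.cons hadj3 SimpleGraph.Walk.nil)))
  obtain h0 | h1' | h2' | h3' : p.length = 0 ∨ p.length = 1 ∨ p.length = 2 ∨ p.length = 3 := by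
    omega
  · exact hne (SimpleGraph.Walk.eq_of_length_eq_zero h0)
  · have ha := p.adj_getVert_succ (i := 0) (by omega)
    rw [SimpleGraph.Walk.getVert_zero] at ha
    rw [show (0 + 1 : ℕ) = p.length by omega, SimpleGraph.Walk.getVert_length] at ha
    rw [doubleGraph_adj] at ha
    simp only at ha
    rw [cycleGraph_adj] at ha
    rcases ha with h | h
    · exact c4 (by linear_combination -h)
    · exact c2 (by linear_combination h)
  · have ha1 := p.adj_getVert_succ (i := 0) (by omega)
    have ha2 := p.adj_getVert_succ (i := 1) (by omega)
    rw [SimpleGraph.Walk.getVert_zero] at ha1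
    rw [show (1 + 1 : ℕ) = p.length by omega, SimpleGraph.Walk.getVert_length] at ha2
    rw [doubleGraph_adj] at ha1 ha2
    simp only at ha1 ha2
    rw [cycleGraph_adj] at ha1 ha2
    rcases ha1 with h | h <;> rcases ha2 with h' | h'
    · exact c5 (by linear_combination -h - h')
    · exact c3 (by linear_combination -h + h')
    · exact c3 (by linear_combination h - h')
    · exact one_ne_zero (α := Fin (m + 2)) (by linear_combination h + h')
  · have ha1 := p.adj_getVert_succ (i := 0) (by omega)
    have ha2 := p.adj_getVert_succ (i := 1) (by omega)
    have ha3 := p.adj_getVert_succ (i := 2) (by omega)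
    rw [SimpleGraph.Walk.getVert_zero] at ha1
    rw [show (2 + 1 : ℕ) = p.length by omega, SimpleGraph.Walk.getVert_length] at ha3
    set w1 := p.getVert 1 with hw1def
    set w2 := p.getVert 2 with hw2def
    rw [doubleGraph_adj] at ha1 ha2 ha3
    simp only at ha1 ha2 ha3
    rw [cycleGraph_adj] at ha1 ha2 ha3
    have hab : w1.1 = i + 1 ∧ w2.1 = i + 2 := by
      rcases ha1 with h1 | h1 <;> rcases ha3 with h3 | h3 <;> rcases ha2 with hm | hm
      · exact absurd (by linear_combination -h1 - h3 - hm : (6 : Fin (m + 2)) = 0) c6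
      · exact absurd (by linear_combination -h1 - h3 + hm : (4 : Fin (m + 2)) = 0) c4
      · exact absurd (by linear_combination -h1 + h3 - hm : (4 : Fin (m + 2)) = 0) c4
      · exact absurd (by linear_combination -h1 + h3 + hm : (2 : Fin (m + 2)) = 0) c2
      · exact absurd (by linear_combination h1 - h3 - hm : (4 : Fin (m + 2)) = 0) c4
      · exact absurd (by linear_combination h1 - h3 + hm : (2 : Fin (m + 2)) = 0) c2
      · exact absurd (by linear_combination h1 + h3 - hm : (2 : Fin (m + 2)) = 0) c2
      · exact ⟨by linear_combination h1, by linear_combination -h3⟩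
    obtain ⟨hA, hB⟩ := hab
    have key : ∀ (w : Fin (m + 2) × Bool) (c : Fin (m + 2)), w ∈ p.support → w.1 = c →
        IsFullCol S c → c ≠ i → c ≠ i + 3 → False := by
      intro w c hsup hwc hfull hci hci3
      have hwS : w ∈ S := by
        rcases hfull with ⟨hkf, hkt⟩
        cases hb : w.2
        · rw [show w = (c, false) from Prod.ext (by rw [hwc]) hb]; exact hkf
        · rw [show w = (c, true) from Prod.ext (by rw [hwc]) hb]; exact hkt
      have hwne1 : w ≠ (i, b1) := by
        intro h; exact hci (by rw [← hwc, h])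
      have hwne2 : w ≠ ((i + 3 : Fin (m + 2)), b2) := by
        intro h; exact hci3 (by rw [← hwc, h])
      exact havoid w hsup hwne1 hwne2 (Finset.mem_coe.mpr hwS)
    rcases hf with hf | hf
    · exact key w1 (i + 1)
        (SimpleGraph.Walk.mem_support_iff_exists_getVert.mpr ⟨1, rfl, by omega⟩) hA hf
        (fun h => one_ne_zero (α := Fin (m + 2)) (by linear_combination h))
        (fun h => c2 (by linear_combination -h))
    · exact key w2 (i + 2)
        (SimpleGraph.Walk.mem_support_iff_exists_getVert.mpr ⟨2, rfl, by omega⟩) hB hf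
        (fun h => c2 (by linear_combination h))
        (fun h => one_ne_zero (α := Fin (m + 2)) (by linear_combination -h))

end UpperAux2
section UpperAux3
variable {m : ℕ}

def colPair {N : ℕ} [NeZero N] (S : Finset (Fin N × Bool)) (k : Fin N) : Finset (Fin N) :=
  if ¬ IsOccCol S (k - 1) ∧ ¬ IsOccCol S (k + 1) then {k - 1, k + 1}
  else if ¬ IsOccCol S (k + 1) then {k + 1, k + 2} else {k - 1, k - 2}

lemma colPair_spec (hn : 7 ≤ m + 2) (S : Finset (Fin (m + 2) × Bool))
    (hS : ((cycleGraph (m + 2)).doubleGraph).IsMVSet ↑S)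
    (k : Fin (m + 2)) (hk : IsFullCol S k) :
    (∀ j ∈ colPair S k, ¬ IsOccCol S j) ∧ (colPair S k).card = 2 := by
  have c1 : (1 : Fin (m + 2)) ≠ 0 := one_ne_zero
  have c2 : (2 : Fin (m + 2)) ≠ 0 := by
    have := fin_cast_ne_zero (m := m) 2 (by omega) (by omega); rwa [Nat.cast_ofNat] at this
  have hA : ¬ (IsOccCol S (k - 1) ∧ IsOccCol S (k + 1)) := fun ⟨a, b⟩ =>
    blocked2 hn S hS k hk a b
  have hB : ¬ (IsOccCol S (k - 2) ∧ IsOccCol S (k + 1)) := by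
    rintro ⟨a, b⟩
    refine blocked3 hn S hS (k - 2) a ?_ (Or.inr ?_)
    · rw [show (k - 2 : Fin (m + 2)) + 3 = k + 1 by ring]; exact b
    · rw [show (k - 2 : Fin (m + 2)) + 2 = k by ring]; exact hk
  have hC : ¬ (IsOccCol S (k - 1) ∧ IsOccCol S (k + 2)) := by
    rintro ⟨a, b⟩
    refine blocked3 hn S hS (k - 1) a ?_ (Or.inl ?_)
    · rw [show (k - 1 : Fin (m + 2)) + 3 = k + 2 by ring]; exact b
    · rw [show (k - 1 : Fin (m + 2)) + 1 = k by ring]; exact hk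
  by_cases o1 : IsOccCol S (k + 1)
  · have e1 : ¬ IsOccCol S (k - 1) := fun h => hA ⟨h, o1⟩
    have e2 : ¬ IsOccCol S (k - 2) := fun h => hB ⟨h, o1⟩
    rw [colPair, if_neg (by tauto), if_neg (by tauto)]
    constructor
    · intro j hj
      rcases Finset.mem_insert.mp hj with rfl | hj
      · exact e1
      · rw [Finset.mem_singleton.mp hj]; exact e2
    · refine Finset.card_pair ?_
      intro h
      exact c1 (by linear_combination h)
  · by_cases o2 : IsOccCol S (k - 1)
    · have e2 : ¬ IsOccCol S (k + 2) := fun h => hC ⟨o2, h⟩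
      rw [colPair, if_neg (by tauto), if_pos o1]
      constructor
      · intro j hj
        rcases Finset.mem_insert.mp hj with rfl | hj
        · exact o1
        · rw [Finset.mem_singleton.mp hj]; exact e2
      · refine Finset.card_pair ?_
        intro h
        exact c1 (by linear_combination -h)
    · rw [colPair, if_pos ⟨o2, o1⟩]
      constructor
      · intro j hj
        rcases Finset.mem_insert.mp hj with rfl | hj
        · exact o2
        · rw [Finset.mem_singleton.mp hj]; exact o1
      · refine Finset.card_pair ?_
        intro h
        exact c2 (by linear_combination -h)

end UpperAux3
section UpperAux4
variable {m : ℕ}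

lemma owners_le (hn : 7 ≤ m + 2) (S : Finset (Fin (m + 2) × Bool))
    (hE : ∀ k : Fin (m + 2), IsFullCol S k → ∀ j ∈ colPair S k, ¬ IsOccCol S j)
    (w : Fin (m + 2)) :
    ((Finset.univ.filter (IsFullCol S)).filter (fun k => w ∈ colPair S k)).card ≤ 2 := by
  have c1 : (1 : Fin (m + 2)) ≠ 0 := one_ne_zero
  have c3 : (3 : Fin (m + 2)) ≠ 0 := by
    have := fin_cast_ne_zero (m := m) 3 (by omega) (by omega); rwa [Nat.cast_ofNat] at this
  have c4 : (4 : Fin (m + 2)) ≠ 0 := by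
    have := fin_cast_ne_zero (m := m) 4 (by omega) (by omega); rwa [Nat.cast_ofNat] at this
  set s := (Finset.univ.filter (IsFullCol S)).filter (fun k => w ∈ colPair S k) with hs
  have hmem : ∀ k ∈ s, IsFullCol S k ∧ w ∈ colPair S k := by
    intro k hk
    rw [hs, Finset.mem_filter, Finset.mem_filter] at hk
    exact ⟨hk.1.2, hk.2⟩
  have hloc : ∀ k ∈ s, k = w - 1 ∨ k = w - 2 ∨ k = w + 1 ∨ k = w + 2 := by
    intro k hk
    obtain ⟨-, hw⟩ := hmem k hk
    rw [colPair] at hw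
    split_ifs at hw <;> simp only [Finset.mem_insert, Finset.mem_singleton] at hw <;>
      rcases hw with h | h <;>
      first
      | (left; linear_combination -h)
      | (right; left; linear_combination -h)
      | (right; right; left; linear_combination -h)
      | (right; right; right; linear_combination -h)
  have hexcl1 : ¬ (w - 2 ∈ s ∧ w - 1 ∈ s) := by
    rintro ⟨ha, hb⟩
    obtain ⟨hfa, hwa⟩ := hmem _ ha
    obtain ⟨hfb, -⟩ := hmem _ hb
    have hocc : IsOccCol S (w - 1) := Or.inl hfb.1
    have hcond : IsOccCol S (w - 2 + 1) := by
      rw [show (w - 2 : Fin (m + 2)) + 1 = w - 1 by ring]; exact hocc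
    rw [colPair, if_neg (fun hcon => hcon.2 hcond), if_neg (not_not_intro hcond)] at hwa
    simp only [Finset.mem_insert, Finset.mem_singleton] at hwa
    rcases hwa with h | h
    · exact c3 (by linear_combination h)
    · exact c4 (by linear_combination h)
  have hexcl2 : ¬ (w + 2 ∈ s ∧ w + 1 ∈ s) := by
    rintro ⟨ha, hb⟩
    obtain ⟨hfa, hwa⟩ := hmem _ ha
    obtain ⟨hfb, -⟩ := hmem _ hb
    have hocc : IsOccCol S (w + 1) := Or.inl hfb.1
    have hcond1 : ¬ (¬ IsOccCol S (w + 2 - 1) ∧ ¬ IsOccCol S (w + 2 + 1)) := by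
      rintro ⟨hx, -⟩
      exact hx (by rw [show (w + 2 : Fin (m + 2)) - 1 = w + 1 by ring]; exact hocc)
    by_cases hc : IsOccCol S (w + 2 + 1)
    · have hj : (w + 2 - 1 : Fin (m + 2)) ∈ colPair S (w + 2) := by
        rw [colPair, if_neg hcond1, if_neg (not_not_intro hc)]
        exact Finset.mem_insert_self _ _
      exact hE _ hfa _ hj
        (by rw [show (w + 2 : Fin (m + 2)) - 1 = w + 1 by ring]; exact hocc)
    · rw [colPair, if_neg hcond1, if_pos hc] at hwa
      simp only [Finset.mem_insert, Finset.mem_singleton] at hwa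
      rcases hwa with h | h
      · exact c3 (by linear_combination -h)
      · exact c4 (by linear_combination -h)
  have hsub : s ⊆ (if w - 1 ∈ s then {w - 1} else {w - 2}) ∪
      (if w + 1 ∈ s then {w + 1} else {w + 2}) := by
    intro k hk
    rcases hloc k hk with rfl | rfl | rfl | rfl
    · rw [if_pos hk]; exact Finset.mem_union_left _ (Finset.mem_singleton_self _)
    · have : w - 1 ∉ s := fun h => hexcl1 ⟨hk, h⟩
      rw [if_neg this]; exact Finset.mem_union_left _ (Finset.mem_singleton_self _)
    · rw [if_pos hk]; exact Finset.mem_union_right _ (Finset.mem_singleton_self _)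
    · have : w + 1 ∉ s := fun h => hexcl2 ⟨hk, h⟩
      rw [if_neg this]; exact Finset.mem_union_right _ (Finset.mem_singleton_self _)
  calc s.card ≤ _ := Finset.card_le_card hsub
    _ ≤ (if w - 1 ∈ s then ({w - 1} : Finset (Fin (m+2))) else {w - 2}).card
        + (if w + 1 ∈ s then ({w + 1} : Finset (Fin (m+2))) else {w + 2}).card :=
      Finset.card_union_le _ _
    _ ≤ 2 := by split_ifs <;> simp

end UpperAux4
section UpperAux5

lemma col_count {N : ℕ} (S : Finset (Fin N × Bool)) :
    S.card + (Finset.univ.filter (fun i => ¬ IsOccCol S i)).card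
      = N + (Finset.univ.filter (IsFullCol S)).card := by
  classical
  have h1 : S.card = ∑ i : Fin N,
      ((if (i, false) ∈ S then 1 else 0) + (if (i, true) ∈ S then 1 else 0)) := by
    calc S.card = (Finset.univ.filter (· ∈ S)).card := by rw [Finset.filter_univ_mem]
      _ = ∑ x : Fin N × Bool, (if x ∈ S then 1 else 0) := Finset.card_filter _ _
      _ = ∑ i : Fin N, ∑ b : Bool, (if (i, b) ∈ S then 1 else 0) := Fintype.sum_prod_type _
      _ = _ := Finset.sum_congr rfl fun i _ => by rw [Fintype.sum_bool]; omega
  have h2 : ∀ i : Fin N,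
      (((if (i, false) ∈ S then 1 else 0) + (if (i, true) ∈ S then 1 else 0))
        + (if ¬ IsOccCol S i then 1 else 0) : ℕ)
      = 1 + (if IsFullCol S i then 1 else 0) := by
    intro i
    by_cases hf : (i, false) ∈ S <;> by_cases ht : (i, true) ∈ S <;>
      simp [IsOccCol, IsFullCol, hf, ht]
  calc S.card + (Finset.univ.filter (fun i => ¬ IsOccCol S i)).card
      = ∑ i : Fin N, (((if (i, false) ∈ S then 1 else 0) + (if (i, true) ∈ S then 1 else 0))
          + (if ¬ IsOccCol S i then 1 else 0)) := by
        rw [h1, Finset.card_filter, ← Finset.sum_add_distrib]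
    _ = ∑ i : Fin N, (1 + (if IsFullCol S i then 1 else 0)) :=
        Finset.sum_congr rfl fun i _ => h2 i
    _ = N + (Finset.univ.filter (IsFullCol S)).card := by
        rw [Finset.sum_add_distrib, Finset.sum_const, Finset.card_univ, Fintype.card_fin,
          ← Finset.card_filter]
        simp

end UpperAux5
theorem mu_double_cycle (n : ℕ) (hn : 7 ≤ n) :
    (SimpleGraph.cycleGraph n).doubleGraph.mutualVisibilityNumber = n := by
  obtain ⟨m, rfl⟩ : ∃ m, n = m + 2 := ⟨n - 2, by omega⟩
  simp only [SimpleGraph.mutualVisibilityNumber]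
  apply le_antisymm
  · apply csSup_le
    · exact ⟨0, ∅, by intro u hu; simp at hu, by simp⟩
    · rintro k ⟨S, hS, rfl⟩
      by_contra hgt
      push_neg at hgt
      have hE : ∀ kk : Fin (m + 2), IsFullCol S kk → ∀ j ∈ colPair S kk, ¬ IsOccCol S j :=
        fun kk hkk => (colPair_spec (by omega) S hS kk hkk).1
      have hcard2 : ∀ kk : Fin (m + 2), IsFullCol S kk → (colPair S kk).card = 2 :=
        fun kk hkk => (colPair_spec (by omega) S hS kk hkk).2
      set Fulls := Finset.univ.filter (IsFullCol S) with hF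
      set Empt := Finset.univ.filter (fun i => ¬ IsOccCol S i) with hEm
      have hcount : S.card + Empt.card = (m + 2) + Fulls.card := by rw [hF, hEm]; exact col_count S
      have key : 2 * Fulls.card ≤ 2 * Empt.card := by
        calc 2 * Fulls.card = ∑ _k ∈ Fulls, 2 := by rw [Finset.sum_const, smul_eq_mul]; ring
          _ = ∑ k ∈ Fulls, (colPair S k).card := Finset.sum_congr rfl fun k hk =>
              (hcard2 k (Finset.mem_filter.mp hk).2).symm
          _ = ∑ k ∈ Fulls, ∑ j ∈ Empt, (if j ∈ colPair S k then 1 else 0) := by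
              refine Finset.sum_congr rfl fun k hk => ?_
              rw [← Finset.card_filter]
              have heq : Empt.filter (fun j => j ∈ colPair S k) = colPair S k := by
                apply Finset.Subset.antisymm
                · exact fun j hj => (Finset.mem_filter.mp hj).2
                · intro j hj
                  refine Finset.mem_filter.mpr ⟨?_, hj⟩
                  exact Finset.mem_filter.mpr
                    ⟨Finset.mem_univ j, hE k (Finset.mem_filter.mp hk).2 j hj⟩
              rw [heq]
          _ = ∑ j ∈ Empt, ∑ k ∈ Fulls, (if j ∈ colPair S k then 1 else 0) := Finset.sum_comm
          _ = ∑ j ∈ Empt, (Fulls.filter (fun k => j ∈ colPair S k)).card :=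
              Finset.sum_congr rfl fun j _ => (Finset.card_filter _ _).symm
          _ ≤ ∑ _j ∈ Empt, 2 := Finset.sum_le_sum fun j _ => owners_le (by omega) S hE j
          _ = 2 * Empt.card := by rw [Finset.sum_const, smul_eq_mul]; ring
      omega
  · have hmem : (m + 2) ∈ {k | ∃ S : Finset (Fin (m + 2) × Bool),
        ((SimpleGraph.cycleGraph (m + 2)).doubleGraph).IsMVSet ↑S ∧ S.card = k} := by
      refine ⟨Finset.univ.image (fun i => (i, false)), mv_lower, ?_⟩
      rw [Finset.card_image_of_injective _ (fun a b h => (Prod.ext_iff.mp h).1),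
        Finset.card_univ, Fintype.card_fin]
    exact le_csSup ⟨Fintype.card (Fin (m + 2) × Bool),
      by rintro k ⟨S, -, rfl⟩; exact Finset.card_le_univ S⟩ hmem
end
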